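/- When γ = 1, the equilibrium quantities satisfy y_i = (a-c)/(s_i(j+2)) for all i = 0,…,j, and consequently the worth of coalition S of size s = s_0 facing any partition of the outsiders into j coalitions equals ((a-c)/(j+2))², independent of the sizes s_1,…,s_j. -/

import Mathlib

open Finset

/-- for `γ = 1` the equilibrium quantities are
`y_i = (a-c)/(s_i (j+2))` and the worth of the coalition of size `s 0` is
`((a-c)/(j+2))²`, independent of the outsiders' sizes. -/
theorem gamma_one_worth (n j : ℕ) (s : Fin (j + 1) → ℕ)
    (hs : ∀ i, 1 ≤ s i) (hsum : ∑ i, s i = n)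
    (a c γ : ℝ) (hc : 0 < c) (hca : c < a) (hγ : γ = 1)
    (A : Fin (j + 1) → ℝ)
    (hA : ∀ i, A i = ∑ k ∈ univ.erase i,
      (s k : ℝ) * (2 + γ * (s i : ℝ) - 2 * γ) / (γ * (s k : ℝ) - 2 * γ + 2))
    (y : Fin (j + 1) → ℝ)
    (hy : ∀ i, y i = (a - c) / (2 * (1 + γ * ((s i : ℝ) - 1)) + γ * A i))
    (lam : Fin (j + 1) → ℝ)
    (hlam : ∀ k, lam k = γ * (s k : ℝ) - 2 * γ + 2)
    (C₀ : ℝ)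
    (hC₀ : C₀ = 2 * (1 + γ * ((s 0 : ℝ) - 1))
      + γ * lam 0 * ∑ k ∈ univ.erase 0, (s k : ℝ) / lam k) :
    (∀ i, y i = (a - c) / ((s i : ℝ) * ((j : ℝ) + 2))) ∧
    (s 0 : ℝ) * (1 + γ * ((s 0 : ℝ) - 1)) * ((a - c) / C₀) ^ 2
      = ((a - c) / ((j : ℝ) + 2)) ^ 2 := by

  subst hγ
  have hsne : ∀ i : Fin (j+1), (s i : ℝ) ≠ 0 := fun i => by
    have := hs i; positivity
  have hcard : ∀ i : Fin (j+1), (univ.erase i).card = j := fun i => by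
    simp [card_erase_of_mem]
  have hAi : ∀ i, A i = (s i : ℝ) * j := by
    intro i
    rw [hA i]
    have : ∀ k ∈ univ.erase i,
        (s k : ℝ) * (2 + 1 * (s i : ℝ) - 2 * 1) / (1 * (s k : ℝ) - 2 * 1 + 2)
        = (s i : ℝ) := by
      intro k _
      field_simp [hsne k]
      ring
    rw [Finset.sum_congr rfl this, Finset.sum_const, hcard i]
    push_cast
    ring
  have hyi : ∀ i, y i = (a - c) / ((s i : ℝ) * ((j : ℝ) + 2)) := by
    intro i
    rw [hy i, hAi i]
    congr 1
    ring
  refine ⟨hyi, ?_⟩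
  have hC : C₀ = (s 0 : ℝ) * ((j : ℝ) + 2) := by
    rw [hC₀, hlam 0]
    have : ∀ k ∈ univ.erase (0 : Fin (j+1)), (s k : ℝ) / lam k = 1 := by
      intro k _
      rw [hlam k]
      field_simp [hsne k]
      ring
    rw [Finset.sum_congr rfl this, Finset.sum_const, hcard 0]
    push_cast
    ring
  have h2 : ((j : ℝ) + 2) ≠ 0 := by positivity
  have hs0 := hsne 0
  rw [hC]
  field_simp
  ring
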